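/- arXiv:2106.14702 — 5 statements merged into one kernel-verified Lean document; each statement's English description precedes it below -/
import Mathlib

section
/- In the adversarial classification game, if (α*, β*) is a Bayesian Nash equilibrium, then β* maximizes over defender strategies β the minimum over attacker strategies α of the defender's expected utility Σᵢ pᵢ Uᵢᴰ(α, β). -/
open Finset

/-- Pure attacker utility against classifier `c` when playing vector `v`. -/
def pureUA {V : Type*} {m : ℕ} (Uu Ud : Fin m → V → ℝ) (i : Fin m) (v : V)
    (c : V → Bool) : ℝ :=
  if c v then -(Ud i v) else Uu i v

/-- Mixed attacker utility of type `i`. -/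
noncomputable def mixedUA {V : Type*} [Fintype V] [DecidableEq V] {m : ℕ}
    (Uu Ud : Fin m → V → ℝ) (α : Fin m → V → ℝ) (β : (V → Bool) → ℝ) (i : Fin m) : ℝ :=
  ∑ v, ∑ c : V → Bool, α i v * β c * pureUA Uu Ud i v c

/-- Expected false alarm cost under mixed defender strategy `β`. -/
noncomputable def falseAlarm {V : Type*} [Fintype V] [DecidableEq V]
    (cfa P0 : V → ℝ) (β : (V → Bool) → ℝ) : ℝ :=
  ∑ c : V → Bool, β c * ∑ v, cfa v * P0 v * (if c v then 1 else 0)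

/-- Mixed defender utility facing a type `i` attacker. -/
noncomputable def mixedUD {V : Type*} [Fintype V] [DecidableEq V] {m : ℕ}
    (Uu Ud : Fin m → V → ℝ) (cfa P0 : V → ℝ) (pa : ℝ)
    (α : Fin m → V → ℝ) (β : (V → Bool) → ℝ) (i : Fin m) : ℝ :=
  -pa * mixedUA Uu Ud α β i - (1 - pa) * falseAlarm cfa P0 β

/-- `α` is a valid attacker mixed strategy: a distribution on `V` for each type. -/
def IsAttStrat {V : Type*} [Fintype V] {m : ℕ} (α : Fin m → V → ℝ) : Prop :=
  ∀ i, (∀ v, 0 ≤ α i v) ∧ ∑ v, α i v = 1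

/-- `β` is a valid defender mixed strategy: a distribution on classifiers. -/
def IsDefStrat {V : Type*} [Fintype V] [DecidableEq V] (β : (V → Bool) → ℝ) : Prop :=
  (∀ c, 0 ≤ β c) ∧ ∑ c : V → Bool, β c = 1

/-- At any Bayesian Nash equilibrium `(α*, β*)`, the defender strategy `β*`
maximizes over `β` the minimum over `α` of the defender's expected utility. -/
theorem bne_defender_is_minmax {V : Type*} [Fintype V] [DecidableEq V] {m : ℕ}
    (Uu Ud : Fin m → V → ℝ)
    (p : Fin m → ℝ) (hp0 : ∀ i, 0 ≤ p i) (hp1 : ∑ i, p i = 1)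
    (pa : ℝ) (hpa0 : 0 < pa) (hpa1 : pa < 1)
    (P0 : V → ℝ) (hP00 : ∀ v, 0 ≤ P0 v) (hP01 : ∑ v, P0 v = 1)
    (cfa : V → ℝ) (hcfa : ∀ v, 0 ≤ cfa v)
    (αs : Fin m → V → ℝ) (βs : (V → Bool) → ℝ)
    (hαs : IsAttStrat αs) (hβs : IsDefStrat βs)
    (hBNE_D : ∀ β, IsDefStrat β →
      ∑ i, p i * mixedUD Uu Ud cfa P0 pa αs β i
        ≤ ∑ i, p i * mixedUD Uu Ud cfa P0 pa αs βs i)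
    (hBNE_A : ∀ α, IsAttStrat α →
      ∑ i, p i * mixedUA Uu Ud α βs i ≤ ∑ i, p i * mixedUA Uu Ud αs βs i) :
    ∀ β, IsDefStrat β → ∃ α, IsAttStrat α ∧
      ∀ α', IsAttStrat α' →
        ∑ i, p i * mixedUD Uu Ud cfa P0 pa α β i
          ≤ ∑ i, p i * mixedUD Uu Ud cfa P0 pa α' βs i := by
  intro β hβ
  have hVne : (Finset.univ : Finset V).Nonempty := by
    by_contra h
    rw [Finset.not_nonempty_iff_eq_empty] at h
    rw [h, Finset.sum_empty] at hP01
    norm_num at hP01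
  set g : Fin m → V → ℝ := fun i v => ∑ c : V → Bool, β c * pureUA Uu Ud i v c with hg
  have hbr : ∀ i, ∃ w, ∀ v, g i v ≤ g i w := by
    intro i
    obtain ⟨w, -, hw⟩ := Finset.exists_max_image Finset.univ (g i) hVne
    exact ⟨w, fun v => hw v (Finset.mem_univ v)⟩
  choose w hw using hbr
  set αh : Fin m → V → ℝ := fun i v => if v = w i then 1 else 0 with hαh
  have hαhS : IsAttStrat αh := by
    intro i
    constructor
    · intro v; dsimp [αh]; split <;> norm_num
    · simp [αh]
  have hUA : ∀ (α : Fin m → V → ℝ), ∀ i, mixedUA Uu Ud α β i = ∑ v, α i v * g i v := by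
    intro α i
    simp only [mixedUA, hg, Finset.mul_sum, mul_assoc]
  have hAhat : ∀ i, mixedUA Uu Ud αh β i = g i (w i) := by
    intro i
    rw [hUA]
    simp [αh, ite_mul]
  have hAle : ∀ (α'' : Fin m → V → ℝ), IsAttStrat α'' → ∀ i,
      mixedUA Uu Ud α'' β i ≤ g i (w i) := by
    intro α'' hα'' i
    rw [hUA]
    calc ∑ v, α'' i v * g i v ≤ ∑ v, α'' i v * g i (w i) :=
          Finset.sum_le_sum fun v _ =>
            mul_le_mul_of_nonneg_left (hw i v) ((hα'' i).1 v)
      _ = g i (w i) := by rw [← Finset.sum_mul, (hα'' i).2, one_mul]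
  have expand : ∀ (α : Fin m → V → ℝ) (β' : (V → Bool) → ℝ),
      ∑ i, p i * mixedUD Uu Ud cfa P0 pa α β' i
        = -pa * (∑ i, p i * mixedUA Uu Ud α β' i) - (1 - pa) * falseAlarm cfa P0 β' := by
    intro α β'
    have h1 : ∀ i ∈ Finset.univ, p i * mixedUD Uu Ud cfa P0 pa α β' i
        = -pa * (p i * mixedUA Uu Ud α β' i) - (1 - pa) * falseAlarm cfa P0 β' * p i := by
      intro i _
      simp only [mixedUD]; ring
    rw [Finset.sum_congr rfl h1, Finset.sum_sub_distrib, ← Finset.mul_sum,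
      ← Finset.mul_sum, hp1, mul_one]
  have key : ∀ (α₁ α₂ : Fin m → V → ℝ) (β' : (V → Bool) → ℝ),
      (∑ i, p i * mixedUA Uu Ud α₁ β' i ≤ ∑ i, p i * mixedUA Uu Ud α₂ β' i) →
      ∑ i, p i * mixedUD Uu Ud cfa P0 pa α₂ β' i
        ≤ ∑ i, p i * mixedUD Uu Ud cfa P0 pa α₁ β' i := by
    intro α₁ α₂ β' h
    rw [expand, expand]
    have := mul_le_mul_of_nonneg_left h hpa0.le
    linarith
  refine ⟨αh, hαhS, ?_⟩
  intro α' hα'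
  have step1 : ∑ i, p i * mixedUD Uu Ud cfa P0 pa αh β i
      ≤ ∑ i, p i * mixedUD Uu Ud cfa P0 pa αs β i := by
    apply key
    apply Finset.sum_le_sum
    intro i _
    apply mul_le_mul_of_nonneg_left _ (hp0 i)
    rw [hAhat i]
    exact hAle αs hαs i
  have step3 : ∑ i, p i * mixedUD Uu Ud cfa P0 pa αs βs i
      ≤ ∑ i, p i * mixedUD Uu Ud cfa P0 pa α' βs i :=
    key α' αs βs (hBNE_A α' hα')
  exact le_trans step1 (le_trans (hBNE_D β hβ) step3)
end

section
/- Let G ∈ [G̲₁, Ḡ₁]×…×[G̲ₘ, Ḡₘ]. Then the minimum over attacker strategies α of the defender's utility when using detection function π_G satisfies min_α Σᵢ pᵢ Uᵢᴰ(α, π_G) ≥ U^D(G), where U^D(G) = −pₐΣᵢ pᵢGᵢ − (1−pₐ)Σ_v c_fa(v)P₀(v)π_G(v). -/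
open Finset

/-- The optimal probability of detection associated with utility profile `G`. -/
noncomputable def piG {V : Type*} [Fintype V] {m : ℕ} (Uu Ud : Fin m → V → ℝ)
    (G : Fin m → ℝ) (v : V) : ℝ :=
  max 0 (⨆ i, (Uu i v - G i) / (Uu i v + Ud i v))

/-- The minimum possible attacker gain `G̲ᵢ = max_v (−Uᵢᵈ(v))`. -/
noncomputable def Glo {V : Type*} [Fintype V] {m : ℕ} (Ud : Fin m → V → ℝ)
    (i : Fin m) : ℝ :=
  ⨆ v, -(Ud i v)

/-- The maximum possible attacker gain `Ḡᵢ = max_v Uᵢᵘ(v)`. -/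
noncomputable def Ghi {V : Type*} [Fintype V] {m : ℕ} (Uu : Fin m → V → ℝ)
    (i : Fin m) : ℝ :=
  ⨆ v, Uu i v

/-- Attacker type `i`'s expected utility against detection function `π`. -/
noncomputable def UApi {V : Type*} [Fintype V] {m : ℕ} (Uu Ud : Fin m → V → ℝ)
    (α : Fin m → V → ℝ) (π : V → ℝ) (i : Fin m) : ℝ :=
  ∑ v, α i v * (Uu i v - π v * (Uu i v + Ud i v))

/-- Defender's expected utility facing a type `i` attacker, with detection function `π`. -/
noncomputable def UDpi {V : Type*} [Fintype V] {m : ℕ} (Uu Ud : Fin m → V → ℝ)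
    (cfa P0 : V → ℝ) (pa : ℝ) (α : Fin m → V → ℝ) (π : V → ℝ) (i : Fin m) : ℝ :=
  -pa * UApi Uu Ud α π i - (1 - pa) * ∑ v, cfa v * P0 v * π v

/-- The minimum gain function `U^D(G)`. -/
noncomputable def UDfun {V : Type*} [Fintype V] {m : ℕ} (Uu Ud : Fin m → V → ℝ)
    (cfa P0 : V → ℝ) (pa : ℝ) (p : Fin m → ℝ) (G : Fin m → ℝ) : ℝ :=
  -pa * ∑ i, p i * G i - (1 - pa) * ∑ v, cfa v * P0 v * piG Uu Ud G v

/-- for `G` in the box, the minimum over attacker strategies of the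
defender's utility when using detection function `π_G` is at least `U^D(G)`. -/
theorem min_defender_utility_ge_UDfun {V : Type*} [Fintype V] [Nonempty V] {m : ℕ}
    (Uu Ud : Fin m → V → ℝ) (hs : ∀ i v, 0 < Uu i v + Ud i v)
    (cfa : V → ℝ) (hcfa : ∀ v, 0 ≤ cfa v)
    (P0 : V → ℝ) (hP00 : ∀ v, 0 ≤ P0 v) (hP01 : ∑ v, P0 v = 1)
    (pa : ℝ) (hpa0 : 0 < pa) (hpa1 : pa < 1)
    (p : Fin m → ℝ) (hp0 : ∀ i, 0 ≤ p i) (hp1 : ∑ i, p i = 1)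
    (G : Fin m → ℝ) (hG : ∀ i, G i ∈ Set.Icc (Glo Ud i) (Ghi Uu i)) :
    ∀ α, IsAttStrat α →
      UDfun Uu Ud cfa P0 pa p G
        ≤ ∑ i, p i * UDpi Uu Ud cfa P0 pa α (piG Uu Ud G) i := by
  intro α hα
  set π := piG Uu Ud G with hπdef
  have key : ∀ i, UApi Uu Ud α π i ≤ G i := by
    intro i
    have hb : ∀ v, α i v * (Uu i v - π v * (Uu i v + Ud i v)) ≤ α i v * G i := by
      intro v
      apply mul_le_mul_of_nonneg_left _ ((hα i).1 v)
      have h1 : (Uu i v - G i) / (Uu i v + Ud i v) ≤ π v := by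
        refine le_trans ?_ (le_max_right _ _)
        exact le_ciSup (f := fun j => (Uu j v - G j) / (Uu j v + Ud j v)) (Set.finite_range _).bddAbove i
      rw [div_le_iff₀ (hs i v)] at h1
      linarith
    calc UApi Uu Ud α π i ≤ ∑ v, α i v * G i :=
          Finset.sum_le_sum (fun v _ => hb v)
      _ = G i := by rw [← Finset.sum_mul, (hα i).2, one_mul]
  simp only [UDpi, UDfun, ← hπdef]
  set C := ∑ v, cfa v * P0 v * π v with hC
  have h2 : ∀ i ∈ Finset.univ, p i * (-pa * UApi Uu Ud α π i - (1 - pa) * C)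
      = (-pa) * (p i * UApi Uu Ud α π i) - ((1 - pa) * C) * p i := fun i _ => by ring
  rw [Finset.sum_congr rfl h2, Finset.sum_sub_distrib, ← Finset.mul_sum, ← Finset.mul_sum,
    hp1, mul_one]
  have h3 : ∑ i, p i * UApi Uu Ud α π i ≤ ∑ i, p i * G i :=
    Finset.sum_le_sum (fun i _ => mul_le_mul_of_nonneg_left (key i) (hp0 i))
  nlinarith
end

section
/- Let G_max maximize U^D(G) over the box [G̲₁, Ḡ₁]×…×[G̲ₘ, Ḡₘ]. Then π_{G_max} is a min-max strategy: for every detection function π : V → [0,1], min_α Σᵢ pᵢ Uᵢᴰ(α, π_{G_max}) ≥ min_α Σᵢ pᵢ Uᵢᴰ(α, π), and moreover min_α Σᵢ pᵢ Uᵢᴰ(α, π_{G_max}) = U^D(G_max). -/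
open Finset

section AuxLemmas

variable {V : Type*} [Fintype V] [Nonempty V] {m : ℕ}

private lemma bdd_range (f : V → ℝ) : BddAbove (Set.range f) :=
  Set.Finite.bddAbove (Set.finite_range f)

private lemma bdd_range' (f : Fin m → ℝ) : BddAbove (Set.range f) :=
  Set.Finite.bddAbove (Set.finite_range f)

/-- `0 ≤ π_G`. -/
private lemma piG_nonneg (Uu Ud : Fin m → V → ℝ) (G : Fin m → ℝ) (v : V) :
    0 ≤ piG Uu Ud G v := le_max_left _ _

/-- Key pointwise bound: attacking any `v` against `π_G` yields at most `G i`. -/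
private lemma piG_pointwise (Uu Ud : Fin m → V → ℝ) (hs : ∀ i v, 0 < Uu i v + Ud i v)
    (G : Fin m → ℝ) (i : Fin m) (v : V) :
    Uu i v - piG Uu Ud G v * (Uu i v + Ud i v) ≤ G i := by
  have h1 : (Uu i v - G i) / (Uu i v + Ud i v) ≤ piG Uu Ud G v :=
    le_trans (le_ciSup (f := fun j => (Uu j v - G j) / (Uu j v + Ud j v))
      (bdd_range' _) i) (le_max_right _ _)
  have h2 := (div_le_iff₀ (hs i v)).mp h1
  linarith

/-- `π_G` is antitone in `G`. -/
private lemma piG_antitone (Uu Ud : Fin m → V → ℝ) [Nonempty (Fin m)]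
    (hs : ∀ i v, 0 < Uu i v + Ud i v)
    {G G' : Fin m → ℝ} (h : ∀ i, G' i ≤ G i) (v : V) :
    piG Uu Ud G v ≤ piG Uu Ud G' v := by
  apply max_le (le_max_left _ _)
  apply ciSup_le
  intro i
  refine le_trans ?_ (le_trans (le_ciSup (bdd_range' _) i) (le_max_right _ _))
  have := hs i v
  have := h i
  rw [div_le_div_iff₀ (hs i v) (hs i v)]
  nlinarith

/-- If `B` dominates all pointwise attacker values against `π`, then `π_B ≤ π`. -/
private lemma piG_le_of_dom (Uu Ud : Fin m → V → ℝ) [Nonempty (Fin m)]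
    (hs : ∀ i v, 0 < Uu i v + Ud i v)
    (π : V → ℝ) (hπ0 : ∀ v, 0 ≤ π v) (B : Fin m → ℝ)
    (hB : ∀ i v, Uu i v - π v * (Uu i v + Ud i v) ≤ B i) (v : V) :
    piG Uu Ud B v ≤ π v := by
  apply max_le (hπ0 v)
  apply ciSup_le
  intro i
  rw [div_le_iff₀ (hs i v)]
  have := hB i v
  linarith

/-- A mixed strategy gets at most the best pointwise value. -/
private lemma UApi_le (Uu Ud : Fin m → V → ℝ) {α : Fin m → V → ℝ} (hα : IsAttStrat α)
    (π : V → ℝ) {B : Fin m → ℝ} (i : Fin m)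
    (hB : ∀ v, Uu i v - π v * (Uu i v + Ud i v) ≤ B i) :
    UApi Uu Ud α π i ≤ B i := by
  calc UApi Uu Ud α π i
      ≤ ∑ v, α i v * B i :=
        Finset.sum_le_sum fun v _ => mul_le_mul_of_nonneg_left (hB v) ((hα i).1 v)
    _ = (∑ v, α i v) * B i := by rw [Finset.sum_mul]
    _ = B i := by rw [(hα i).2, one_mul]

/-- Splitting the weighted sum of `UDpi`. -/
private lemma sum_UDpi_eq (Uu Ud : Fin m → V → ℝ) (cfa P0 : V → ℝ) (pa : ℝ)
    (p : Fin m → ℝ) (hp1 : ∑ i, p i = 1) (α : Fin m → V → ℝ) (π : V → ℝ) :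
    ∑ i, p i * UDpi Uu Ud cfa P0 pa α π i
      = -pa * ∑ i, p i * UApi Uu Ud α π i - (1 - pa) * ∑ v, cfa v * P0 v * π v := by
  calc ∑ i, p i * UDpi Uu Ud cfa P0 pa α π i
      = ∑ i, (p i * (-pa * UApi Uu Ud α π i)
          - p i * ((1 - pa) * ∑ v, cfa v * P0 v * π v)) := by
        refine Finset.sum_congr rfl fun i _ => ?_
        unfold UDpi; ring
    _ = ∑ i, p i * (-pa * UApi Uu Ud α π i)
          - ∑ i, p i * ((1 - pa) * ∑ v, cfa v * P0 v * π v) :=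
        Finset.sum_sub_distrib _ _
    _ = -pa * ∑ i, p i * UApi Uu Ud α π i
          - (∑ i, p i) * ((1 - pa) * ∑ v, cfa v * P0 v * π v) := by
        rw [← Finset.sum_mul]
        congr 1
        rw [Finset.mul_sum]
        exact Finset.sum_congr rfl fun i _ => by ring
    _ = _ := by rw [hp1]; ring

/-- Best responses: there is a strategy `α` attaining the optimal values `B`,
which lie in the box, dominate every strategy, and satisfy `π_B ≤ π`. -/
private lemma exists_BR (Uu Ud : Fin m → V → ℝ) [Nonempty (Fin m)]
    (hs : ∀ i v, 0 < Uu i v + Ud i v)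
    (π : V → ℝ) (hπ : ∀ v, π v ∈ Set.Icc (0 : ℝ) 1) :
    ∃ (B : Fin m → ℝ) (α : Fin m → V → ℝ), IsAttStrat α ∧
      (∀ i, UApi Uu Ud α π i = B i) ∧
      (∀ i v, Uu i v - π v * (Uu i v + Ud i v) ≤ B i) ∧
      (∀ i, B i ∈ Set.Icc (Glo Ud i) (Ghi Uu i)) ∧
      (∀ v, piG Uu Ud B v ≤ π v) := by
  classical
  have hmaxv : ∀ i : Fin m, ∃ v0, ∀ v,
      Uu i v - π v * (Uu i v + Ud i v) ≤ Uu i v0 - π v0 * (Uu i v0 + Ud i v0) :=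
    fun i => Finite.exists_max _
  choose v0 hv0 using hmaxv
  refine ⟨fun i => Uu i (v0 i) - π (v0 i) * (Uu i (v0 i) + Ud i (v0 i)),
    fun i w => if w = v0 i then 1 else 0, ?_, ?_, hv0, ?_, ?_⟩
  · intro i
    refine ⟨fun v => ?_, ?_⟩
    · dsimp only; split <;> norm_num
    · simp [Finset.sum_ite_eq']
  · intro i
    unfold UApi
    simp [ite_mul, Finset.sum_ite_eq']
  · intro i
    rw [Set.mem_Icc]
    unfold Glo Ghi
    constructor
    · apply ciSup_le
      intro v
      refine le_trans ?_ (hv0 i v)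
      have h1 := (hπ v).1
      have h2 := (hπ v).2
      have h3 := hs i v
      nlinarith
    · refine le_trans ?_ (le_ciSup (bdd_range (Uu i)) (v0 i))
      dsimp only
      have h1 := (hπ (v0 i)).1
      have h3 := hs i (v0 i)
      nlinarith
  · exact piG_le_of_dom Uu Ud hs π (fun v => (hπ v).1) _ hv0

end AuxLemmas

/-- if `G_max` maximizes `U^D` over the box, then `π_{G_max}` is a min-max
strategy of the defender, with min-max value `U^D(G_max)`. -/
theorem piG_max_is_minmax {V : Type*} [Fintype V] [Nonempty V] {m : ℕ}
    (Uu Ud : Fin m → V → ℝ) (hs : ∀ i v, 0 < Uu i v + Ud i v)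
    (cfa : V → ℝ) (hcfa : ∀ v, 0 ≤ cfa v)
    (P0 : V → ℝ) (hP00 : ∀ v, 0 ≤ P0 v) (hP01 : ∑ v, P0 v = 1)
    (pa : ℝ) (hpa0 : 0 < pa) (hpa1 : pa < 1)
    (p : Fin m → ℝ) (hp0 : ∀ i, 0 ≤ p i) (hp1 : ∑ i, p i = 1)
    (Gmax : Fin m → ℝ) (hGmax : ∀ i, Gmax i ∈ Set.Icc (Glo Ud i) (Ghi Uu i))
    (hmax : ∀ G : Fin m → ℝ, (∀ i, G i ∈ Set.Icc (Glo Ud i) (Ghi Uu i)) →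
      UDfun Uu Ud cfa P0 pa p G ≤ UDfun Uu Ud cfa P0 pa p Gmax) :
    -- the min over `α` of the defender's utility against `π_{G_max}` equals `U^D(G_max)`
    ((∀ α, IsAttStrat α →
        UDfun Uu Ud cfa P0 pa p Gmax
          ≤ ∑ i, p i * UDpi Uu Ud cfa P0 pa α (piG Uu Ud Gmax) i)
      ∧ ∃ α, IsAttStrat α ∧
          ∑ i, p i * UDpi Uu Ud cfa P0 pa α (piG Uu Ud Gmax) i
            = UDfun Uu Ud cfa P0 pa p Gmax)
    -- and it dominates the min over `α` attained by any detection function `π`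
    ∧ ∀ π : V → ℝ, (∀ v, π v ∈ Set.Icc (0 : ℝ) 1) →
        ∃ α, IsAttStrat α ∧
          ∑ i, p i * UDpi Uu Ud cfa P0 pa α π i ≤ UDfun Uu Ud cfa P0 pa p Gmax := by
  haveI : Nonempty (Fin m) := by
    rcases Nat.eq_zero_or_pos m with h | h
    · subst h; simp at hp1
    · exact ⟨⟨0, h⟩⟩
  -- `π_{G_max}` is a valid detection function
  have hπg : ∀ v, piG Uu Ud Gmax v ∈ Set.Icc (0 : ℝ) 1 := by
    intro v
    refine ⟨piG_nonneg Uu Ud Gmax v, ?_⟩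
    apply max_le zero_le_one
    apply ciSup_le
    intro i
    rw [div_le_one (hs i v)]
    have h1 : -(Ud i v) ≤ Gmax i :=
      le_trans (le_ciSup (bdd_range (fun v => -(Ud i v))) v) (hGmax i).1
    linarith
  -- Part 1a: any strategy yields at least `U^D(G_max)` for the defender
  have part1a : ∀ α, IsAttStrat α →
      UDfun Uu Ud cfa P0 pa p Gmax
        ≤ ∑ i, p i * UDpi Uu Ud cfa P0 pa α (piG Uu Ud Gmax) i := by
    intro α hα
    rw [sum_UDpi_eq Uu Ud cfa P0 pa p hp1 α (piG Uu Ud Gmax)]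
    unfold UDfun
    have hA : ∑ i, p i * UApi Uu Ud α (piG Uu Ud Gmax) i ≤ ∑ i, p i * Gmax i := by
      refine Finset.sum_le_sum fun i _ => mul_le_mul_of_nonneg_left ?_ (hp0 i)
      exact UApi_le Uu Ud hα _ i (fun v => piG_pointwise Uu Ud hs Gmax i v)
    nlinarith
  -- Best response against `π_{G_max}`
  obtain ⟨B, α₀, hα₀, hval, hdom, hbox, hπB⟩ := exists_BR Uu Ud hs (piG Uu Ud Gmax) hπg
  -- `B ≤ G_max` componentwise
  have hBle : ∀ i, B i ≤ Gmax i := by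
    intro i
    rw [← hval i]
    exact UApi_le Uu Ud hα₀ _ i (fun v => piG_pointwise Uu Ud hs Gmax i v)
  -- `π_B = π_{G_max}`
  have hπeq : piG Uu Ud B = piG Uu Ud Gmax := by
    funext v
    exact le_antisymm (hπB v) (piG_antitone Uu Ud hs hBle v)
  -- maximality of `G_max` forces `∑ p B = ∑ p G_max`
  have hUD : UDfun Uu Ud cfa P0 pa p B ≤ UDfun Uu Ud cfa P0 pa p Gmax := hmax B hbox
  have hsumeq : ∑ i, p i * B i = ∑ i, p i * Gmax i := by
    have h1 : ∑ i, p i * B i ≤ ∑ i, p i * Gmax i :=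
      Finset.sum_le_sum fun i _ => mul_le_mul_of_nonneg_left (hBle i) (hp0 i)
    have h2 : ∑ i, p i * Gmax i ≤ ∑ i, p i * B i := by
      unfold UDfun at hUD
      rw [hπeq] at hUD
      nlinarith
    linarith
  -- Part 1b
  have part1b : ∑ i, p i * UDpi Uu Ud cfa P0 pa α₀ (piG Uu Ud Gmax) i
      = UDfun Uu Ud cfa P0 pa p Gmax := by
    rw [sum_UDpi_eq Uu Ud cfa P0 pa p hp1 α₀ (piG Uu Ud Gmax)]
    unfold UDfun
    have : ∑ i, p i * UApi Uu Ud α₀ (piG Uu Ud Gmax) i = ∑ i, p i * Gmax i := by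
      rw [← hsumeq]
      exact Finset.sum_congr rfl fun i _ => by rw [hval i]
    rw [this]
  refine ⟨⟨part1a, α₀, hα₀, part1b⟩, ?_⟩
  -- Part 2
  intro π hπ
  obtain ⟨B', α', hα', hval', hdom', hbox', hπB'⟩ := exists_BR Uu Ud hs π hπ
  refine ⟨α', hα', ?_⟩
  rw [sum_UDpi_eq Uu Ud cfa P0 pa p hp1 α' π]
  have hC : ∑ v, cfa v * P0 v * piG Uu Ud B' v ≤ ∑ v, cfa v * P0 v * π v := by
    refine Finset.sum_le_sum fun v _ => ?_
    exact mul_le_mul_of_nonneg_left (hπB' v) (mul_nonneg (hcfa v) (hP00 v))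
  have hUD' : UDfun Uu Ud cfa P0 pa p B' ≤ UDfun Uu Ud cfa P0 pa p Gmax := hmax B' hbox'
  have hvaleq : ∑ i, p i * UApi Uu Ud α' π i = ∑ i, p i * B' i :=
    Finset.sum_congr rfl fun i _ => by rw [hval' i]
  unfold UDfun at hUD' ⊢
  rw [hvaleq]
  nlinarith
end

section
/- If G_max maximizes U^D over the box, then the utility profile G_max is attained exactly by best-responding attackers: for every type i, max_v {Uᵢᵘ(v) − π_{G_max}(v)·(Uᵢᵘ(v)+Uᵢᵈ(v))} = (G_max)ᵢ. -/
open Finset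

/-- The best-response utility profile `G^π` induced by a detection function `π`. -/
noncomputable def Gpi {V : Type*} [Fintype V] {m : ℕ} (Uu Ud : Fin m → V → ℝ)
    (π : V → ℝ) (i : Fin m) : ℝ :=
  ⨆ v, (Uu i v - π v * (Uu i v + Ud i v))

/-- if `G_max` maximizes `U^D` over the box, then each attacker type's
best-response payoff against `π_{G_max}` is exactly `(G_max)ᵢ`. -/
theorem best_response_attains_Gmax {V : Type*} [Fintype V] [Nonempty V] {m : ℕ}
    (Uu Ud : Fin m → V → ℝ) (hs : ∀ i v, 0 < Uu i v + Ud i v)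
    (cfa : V → ℝ) (hcfa : ∀ v, 0 ≤ cfa v)
    (P0 : V → ℝ) (hP00 : ∀ v, 0 ≤ P0 v) (hP01 : ∑ v, P0 v = 1)
    (pa : ℝ) (hpa0 : 0 < pa) (hpa1 : pa < 1)
    (p : Fin m → ℝ) (hp0 : ∀ i, 0 < p i) (hp1 : ∑ i, p i = 1)
    (Gmax : Fin m → ℝ) (hGmax : ∀ i, Gmax i ∈ Set.Icc (Glo Ud i) (Ghi Uu i))
    (hmax : ∀ G : Fin m → ℝ, (∀ i, G i ∈ Set.Icc (Glo Ud i) (Ghi Uu i)) →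
      UDfun Uu Ud cfa P0 pa p G ≤ UDfun Uu Ud cfa P0 pa p Gmax) :
    ∀ i, Gpi Uu Ud (piG Uu Ud Gmax) i = Gmax i := by
  classical
  intro i
  haveI : Nonempty (Fin m) := ⟨i⟩
  set π := piG Uu Ud Gmax with hπdef
  have bddV : ∀ f : V → ℝ, BddAbove (Set.range f) := fun f => (Set.finite_range f).bddAbove
  have bddM : ∀ f : Fin m → ℝ, BddAbove (Set.range f) := fun f => (Set.finite_range f).bddAbove
  have hratio : ∀ j v, (Uu j v - Gmax j) / (Uu j v + Ud j v) ≤ π v := by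
    intro j v
    calc (Uu j v - Gmax j) / (Uu j v + Ud j v)
        ≤ ⨆ k, (Uu k v - Gmax k) / (Uu k v + Ud k v) := le_ciSup (f := fun k => (Uu k v - Gmax k) / (Uu k v + Ud k v)) (bddM _) j
      _ ≤ π v := le_max_right _ _
  have hπ0 : ∀ v, 0 ≤ π v := fun v => le_max_left _ _
  have hπ1 : ∀ v, π v ≤ 1 := by
    intro v
    apply max_le zero_le_one
    apply ciSup_le
    intro j
    rw [div_le_one (hs j v)]
    have h1 : -(Ud j v) ≤ Glo Ud j := le_ciSup (f := fun v => -(Ud j v)) (bddV _) v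
    have h2 := (hGmax j).1
    linarith
  have hub : ∀ v, Uu i v - π v * (Uu i v + Ud i v) ≤ Gmax i := by
    intro v
    have h := hratio i v
    rw [div_le_iff₀ (hs i v)] at h
    linarith
  have hle : Gpi Uu Ud π i ≤ Gmax i := ciSup_le hub
  rcases lt_or_eq_of_le hle with hlt | heq
  · exfalso
    have hstrict : ∀ v, Uu i v - π v * (Uu i v + Ud i v) < Gmax i := fun v =>
      lt_of_le_of_lt (le_ciSup (f := fun v => Uu i v - π v * (Uu i v + Ud i v)) (bddV _) v) hlt
    have hGlo : Glo Ud i < Gmax i := by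
      have hG : Glo Ud i ≤ Gpi Uu Ud π i := by
        apply ciSup_le
        intro v
        have h1 := hπ1 v
        have h2 := hs i v
        calc -(Ud i v) ≤ Uu i v - π v * (Uu i v + Ud i v) := by nlinarith
          _ ≤ Gpi Uu Ud π i := le_ciSup (f := fun v => Uu i v - π v * (Uu i v + Ud i v)) (bddV _) v
      linarith
    obtain ⟨v0, hv0⟩ := Finite.exists_min
      (fun v => π v * (Uu i v + Ud i v) - (Uu i v - Gmax i))
    set c := π v0 * (Uu i v0 + Ud i v0) - (Uu i v0 - Gmax i) with hc
    have hcpos : 0 < c := by have := hstrict v0; simp only [hc]; linarith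
    set ε := min c (Gmax i - Glo Ud i) with hε
    have hεpos : 0 < ε := lt_min hcpos (by linarith)
    set G' := Function.update Gmax i (Gmax i - ε) with hG'
    have hG'box : ∀ j, G' j ∈ Set.Icc (Glo Ud j) (Ghi Uu j) := by
      intro j
      by_cases hji : j = i
      · subst hji
        rw [hG', Function.update_self]
        constructor
        · have h1 : ε ≤ Gmax j - Glo Ud j := min_le_right _ _
          linarith
        · have := (hGmax j).2
          linarith
      · rw [hG', Function.update_of_ne hji]
        exact hGmax j
    have hπ' : ∀ v, piG Uu Ud G' v = π v := by
      intro v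
      apply le_antisymm
      · apply max_le (hπ0 v)
        apply ciSup_le
        intro j
        by_cases hji : j = i
        · subst hji
          rw [hG', Function.update_self, div_le_iff₀ (hs j v)]
          have hcle : c ≤ π v * (Uu j v + Ud j v) - (Uu j v - Gmax j) := hv0 v
          have h2 : ε ≤ c := min_le_left _ _
          linarith
        · rw [hG', Function.update_of_ne hji]
          exact hratio j v
      · apply max_le (le_max_left _ _)
        apply ciSup_le
        intro j
        have hG'le : G' j ≤ Gmax j := by
          by_cases hji : j = i
          · subst hji; rw [hG', Function.update_self]; linarith
          · rw [hG', Function.update_of_ne hji]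
        calc (Uu j v - Gmax j) / (Uu j v + Ud j v)
            ≤ (Uu j v - G' j) / (Uu j v + Ud j v) := by
              rw [div_le_div_iff_of_pos_right (hs j v)]; linarith
          _ ≤ ⨆ k, (Uu k v - G' k) / (Uu k v + Ud k v) := le_ciSup (f := fun k => (Uu k v - G' k) / (Uu k v + Ud k v)) (bddM _) j
          _ ≤ piG Uu Ud G' v := le_max_right _ _
    have hsum : ∑ j, p j * G' j = (∑ j, p j * Gmax j) - p i * ε := by
      have key : ∀ j, p j * G' j = p j * Gmax j - (if j = i then p i * ε else 0) := by
        intro j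
        by_cases hji : j = i
        · subst hji; rw [hG', Function.update_self]; simp; ring
        · rw [hG', Function.update_of_ne hji]; simp [hji]
      simp_rw [key, Finset.sum_sub_distrib, Finset.sum_ite_eq' Finset.univ i]
      simp
    have hUD : UDfun Uu Ud cfa P0 pa p G' = UDfun Uu Ud cfa P0 pa p Gmax + pa * (p i * ε) := by
      unfold UDfun
      rw [hsum]
      have : ∑ v, cfa v * P0 v * piG Uu Ud G' v = ∑ v, cfa v * P0 v * π v := by
        apply Finset.sum_congr rfl
        intro v _
        rw [hπ' v]
      rw [this, hπdef]
      ring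
    have hcontra := hmax G' hG'box
    rw [hUD] at hcontra
    have hpi := mul_pos hpa0 (mul_pos (hp0 i) hεpos)
    linarith
  · exact heq
end

section
/- If (α*, β*) is a Bayesian Nash equilibrium and π* = π^{β*} is the induced detection probability, then for every v ∈ V with 0 < π*(v) < 1, the equilibrium attacker strategy satisfies Σᵢ pᵢ α*ⁱ_v (Uᵢᵘ(v) + Uᵢᵈ(v)) = ((1−pₐ)/pₐ)·c_fa(v)·P₀(v); for v with π*(v) = 0 the left side is ≤ the right side; and for v with π*(v) = 1 the left side is ≥ the right side. -/
open Finset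

/-- first-order equilibrium conditions on the attacker's strategy. At a BNE
with induced detection probability `π*`, for each vector `v` the weighted attacker mass
`Σᵢ pᵢ α*ⁱ_v (Uᵢᵘ(v)+Uᵢᵈ(v))` equals `((1−pₐ)/pₐ)·c_fa(v)·P₀(v)` when `0 < π*(v) < 1`,
is at most it when `π*(v) = 0`, and at least it when `π*(v) = 1`. -/
theorem bne_attacker_first_order {V : Type*} [Fintype V] {m : ℕ}
    (Uu Ud : Fin m → V → ℝ)
    (cfa : V → ℝ) (hcfa : ∀ v, 0 ≤ cfa v)
    (P0 : V → ℝ) (hP00 : ∀ v, 0 ≤ P0 v) (hP01 : ∑ v, P0 v = 1)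
    (pa : ℝ) (hpa0 : 0 < pa) (hpa1 : pa < 1)
    (p : Fin m → ℝ) (hp0 : ∀ i, 0 ≤ p i) (hp1 : ∑ i, p i = 1)
    (αs : Fin m → V → ℝ) (hαs : IsAttStrat αs)
    (πs : V → ℝ) (hπs : ∀ v, πs v ∈ Set.Icc (0 : ℝ) 1)
    -- BNE: `π*` maximizes the defender's expected utility against `α*` ...
    (hBNE_D : ∀ π : V → ℝ, (∀ v, π v ∈ Set.Icc (0 : ℝ) 1) →
      ∑ i, p i * UDpi Uu Ud cfa P0 pa αs π i ≤ ∑ i, p i * UDpi Uu Ud cfa P0 pa αs πs i)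
    -- ... and `α*` maximizes the attacker's expected utility against `π*`
    (hBNE_A : ∀ α, IsAttStrat α →
      ∑ i, p i * UApi Uu Ud α πs i ≤ ∑ i, p i * UApi Uu Ud αs πs i) :
    ∀ v : V,
      (0 < πs v → πs v < 1 →
        ∑ i, p i * αs i v * (Uu i v + Ud i v) = (1 - pa) / pa * (cfa v * P0 v))
      ∧ (πs v = 0 →
        ∑ i, p i * αs i v * (Uu i v + Ud i v) ≤ (1 - pa) / pa * (cfa v * P0 v))
      ∧ (πs v = 1 →
        (1 - pa) / pa * (cfa v * P0 v) ≤ ∑ i, p i * αs i v * (Uu i v + Ud i v)) := by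
  classical
  set c : V → ℝ := fun v =>
    pa * (∑ i, p i * αs i v * (Uu i v + Ud i v)) - (1 - pa) * (cfa v * P0 v) with hc
  -- linear expansion of the defender objective difference
  have heq : ∀ π : V → ℝ,
      ∑ i, p i * UDpi Uu Ud cfa P0 pa αs πs i - ∑ i, p i * UDpi Uu Ud cfa P0 pa αs π i
        = ∑ v, (πs v - π v) * c v := by
    intro π
    simp only [UDpi, UApi]
    rw [← Finset.sum_sub_distrib]
    have h1 : ∀ i ∈ Finset.univ (α := Fin m),
        (p i * (-pa * ∑ v, αs i v * (Uu i v - πs v * (Uu i v + Ud i v))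
            - (1 - pa) * ∑ v, cfa v * P0 v * πs v)
          - p i * (-pa * ∑ v, αs i v * (Uu i v - π v * (Uu i v + Ud i v))
            - (1 - pa) * ∑ v, cfa v * P0 v * π v))
        = ∑ v, p i * ((πs v - π v)
            * (pa * (αs i v * (Uu i v + Ud i v)) - (1 - pa) * (cfa v * P0 v))) := by
      intro i _
      simp only [mul_sub, Finset.mul_sum, ← Finset.sum_sub_distrib]
      apply Finset.sum_congr rfl
      intro v _
      ring
    rw [Finset.sum_congr rfl h1, Finset.sum_comm]
    apply Finset.sum_congr rfl
    intro v _
    have h2 : ∑ i, p i * ((πs v - π v)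
        * (pa * (αs i v * (Uu i v + Ud i v)) - (1 - pa) * (cfa v * P0 v)))
        = (πs v - π v) * (pa * (∑ i, p i * αs i v * (Uu i v + Ud i v)))
          - (πs v - π v) * ((1 - pa) * (cfa v * P0 v)) * ∑ i, p i := by
      simp only [Finset.mul_sum, Finset.sum_mul, ← Finset.sum_sub_distrib]
      apply Finset.sum_congr rfl
      intro i _
      ring
    rw [h2, hp1]
    simp only [hc]
    ring
  -- key perturbation inequality
  have key : ∀ v (t : ℝ), 0 ≤ t → t ≤ 1 → (t - πs v) * c v ≤ 0 := by
    intro v t ht0 ht1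
    have hπ' : ∀ w, Function.update πs v t w ∈ Set.Icc (0 : ℝ) 1 := by
      intro w
      by_cases h : w = v
      · subst h; simp [Function.update_self]; exact ⟨ht0, ht1⟩
      · simp only [Function.update_of_ne h]; exact hπs w
    have h := hBNE_D _ hπ'
    have h2 := heq (Function.update πs v t)
    have h3 : ∑ w, (πs w - Function.update πs v t w) * c w = (πs v - t) * c v := by
      rw [Finset.sum_eq_single v]
      · simp [Function.update_self]
      · intro w _ hw; simp [Function.update_of_ne hw]
      · intro h; exact absurd (Finset.mem_univ v) h
    nlinarith [h, h2, h3]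
  intro v
  have hge : 0 < πs v → 0 ≤ c v := by
    intro h
    have := key v 0 le_rfl zero_le_one
    nlinarith
  have hle : πs v < 1 → c v ≤ 0 := by
    intro h
    have := key v 1 zero_le_one le_rfl
    nlinarith
  have hpane : pa ≠ 0 := ne_of_gt hpa0
  refine ⟨?_, ?_, ?_⟩
  · intro h0 h1
    have hcv : c v = 0 := le_antisymm (hle h1) (hge h0)
    simp only [hc] at hcv
    field_simp
    nlinarith [hcv]
  · intro h0
    have hcv : c v ≤ 0 := hle (by rw [h0]; exact zero_lt_one)
    simp only [hc] at hcv
    rw [div_mul_eq_mul_div, le_div_iff₀ hpa0]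
    nlinarith
  · intro h1
    have hcv : 0 ≤ c v := hge (by rw [h1]; exact zero_lt_one)
    simp only [hc] at hcv
    rw [div_mul_eq_mul_div, div_le_iff₀ hpa0]
    nlinarith
end
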